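/- Let b : S → {0,1}^K satisfy, for each s ∈ S, b(s)_a · b(s)_{a'} = 0 whenever a ≠ a' and b(s)_a² = b(s)_a (i.e., b(s) is an indicator of at most one action). Let Y, P : Ω → ℝ^C and V : Ω → S be random variables with all expectations finite, let γ_a = E[(Y − P)·b(V)_a] / E[b(V)_a] (assuming E[b(V)_a] > 0 for all a), and set P' = P + ∑_a γ_a b(V)_a. Then E[‖Y − P‖²] − E[‖Y − P'‖²] = ∑_a ‖γ_a‖² E[b(V)_a]. -/

import Mathlib

open MeasureTheory

lemma stmt18_pointwise {E : Type*} [NormedAddCommGroup E] [InnerProductSpace ℝ E]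
    {K : ℕ} (c : Fin K → ℝ) (hc01 : ∀ a, c a = 0 ∨ c a = 1)
    (hd : ∀ a a' : Fin K, a ≠ a' → c a * c a' = 0)
    (x : E) (y : Fin K → E) :
    ‖x‖ ^ 2 - ‖x - ∑ a, c a • y a‖ ^ 2 =
      2 * ∑ a, c a * (inner ℝ x (y a) : ℝ) - ∑ a, c a * ‖y a‖ ^ 2 := by
  have hcsq : ∀ a, c a * c a = c a := by
    intro a; rcases hc01 a with h | h <;> simp [h]
  have hnorm : ‖x - ∑ a, c a • y a‖ ^ 2 =
      ‖x‖ ^ 2 - 2 * (inner ℝ x (∑ a, c a • y a) : ℝ) + ‖∑ a, c a • y a‖ ^ 2 :=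
    norm_sub_sq_real x _
  have h1 : (inner ℝ x (∑ a, c a • y a) : ℝ) = ∑ a, c a * (inner ℝ x (y a) : ℝ) := by
    rw [inner_sum]; exact Finset.sum_congr rfl fun a _ => real_inner_smul_right x (y a) (c a)
  have h2 : ‖∑ a, c a • y a‖ ^ 2 = ∑ a, c a * ‖y a‖ ^ 2 := by
    rw [← real_inner_self_eq_norm_sq, sum_inner]
    refine Finset.sum_congr rfl fun a _ => ?_
    rw [inner_sum]
    rw [Finset.sum_eq_single a]
    · rw [real_inner_smul_left, real_inner_smul_right, real_inner_self_eq_norm_sq]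
      rw [← mul_assoc, hcsq a]
    · intro a' _ hne
      rw [real_inner_smul_left, real_inner_smul_right, ← mul_assoc,
        hd a a' (Ne.symm hne)]
      ring
    · intro h; exact absurd (Finset.mem_univ a) h
  rw [hnorm, h1, h2]; ring

theorem stmt18 {Ω S : Type*} [MeasurableSpace Ω] (μ : Measure Ω)
    [IsProbabilityMeasure μ] {C K : ℕ}
    (b : S → Fin K → ℝ)
    (hb01 : ∀ s a, b s a = 0 ∨ b s a = 1)
    (hdisj : ∀ s, ∀ a a' : Fin K, a ≠ a' → b s a * b s a' = 0)
    (Y P : Ω → EuclideanSpace ℝ (Fin C)) (V : Ω → S)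
    (hInt1 : Integrable (fun ω => ‖Y ω - P ω‖ ^ 2) μ)
    (hIntb : ∀ a, Integrable (fun ω => b (V ω) a) μ)
    (hIntYP : ∀ a, Integrable (fun ω => b (V ω) a • (Y ω - P ω)) μ)
    (hpos : ∀ a, 0 < ∫ ω, b (V ω) a ∂μ)
    (γ : Fin K → EuclideanSpace ℝ (Fin C))
    (hγ : γ = fun a => (∫ ω, b (V ω) a ∂μ)⁻¹ • ∫ ω, b (V ω) a • (Y ω - P ω) ∂μ)
    (P' : Ω → EuclideanSpace ℝ (Fin C))
    (hP' : P' = fun ω => P ω + ∑ a, b (V ω) a • γ a)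
    (hInt2 : Integrable (fun ω => ‖Y ω - P' ω‖ ^ 2) μ) :
    (∫ ω, ‖Y ω - P ω‖ ^ 2 ∂μ) - ∫ ω, ‖Y ω - P' ω‖ ^ 2 ∂μ =
      ∑ a, ‖γ a‖ ^ 2 * ∫ ω, b (V ω) a ∂μ := by
  -- key fact: ∫ b_a • (Y - P) = (∫ b_a) • γ a
  have hkey : ∀ a, (∫ ω, b (V ω) a • (Y ω - P ω) ∂μ) = (∫ ω, b (V ω) a ∂μ) • γ a := by
    intro a
    rw [hγ]
    rw [smul_smul, mul_inv_cancel₀ (ne_of_gt (hpos a)), one_smul]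
  -- pointwise identity
  have hpt : ∀ ω, ‖Y ω - P ω‖ ^ 2 - ‖Y ω - P' ω‖ ^ 2 =
      2 * ∑ a, b (V ω) a * (inner ℝ (Y ω - P ω) (γ a) : ℝ)
        - ∑ a, b (V ω) a * ‖γ a‖ ^ 2 := by
    intro ω
    have : Y ω - P' ω = (Y ω - P ω) - ∑ a, b (V ω) a • γ a := by
      rw [hP']; module
    rw [this]
    exact stmt18_pointwise (fun a => b (V ω) a) (fun a => hb01 (V ω) a)
      (fun a a' h => hdisj (V ω) a a' h) (Y ω - P ω) γ
  -- integrability of the inner-product terms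
  have hIntInner : ∀ a, Integrable
      (fun ω => b (V ω) a * (inner ℝ (Y ω - P ω) (γ a) : ℝ)) μ := by
    intro a
    have := ((innerSL ℝ (γ a)).integrable_comp (hIntYP a))
    refine this.congr (Filter.Eventually.of_forall fun ω => ?_)
    simp only [innerSL_apply_apply, real_inner_smul_right]
    rw [real_inner_comm]
  have hIntS1 : Integrable
      (fun ω => 2 * ∑ a, b (V ω) a * (inner ℝ (Y ω - P ω) (γ a) : ℝ)) μ :=
    (integrable_finset_sum _ fun a _ => hIntInner a).const_mul 2
  have hIntS2 : Integrable (fun ω => ∑ a, b (V ω) a * ‖γ a‖ ^ 2) μ :=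
    integrable_finset_sum _ fun a _ => (hIntb a).mul_const _
  -- value of ∫ b_a * ⟪Y-P, γ a⟫
  have hval : ∀ a, (∫ ω, b (V ω) a * (inner ℝ (Y ω - P ω) (γ a) : ℝ) ∂μ)
      = ‖γ a‖ ^ 2 * ∫ ω, b (V ω) a ∂μ := by
    intro a
    have h1 : (fun ω => b (V ω) a * (inner ℝ (Y ω - P ω) (γ a) : ℝ))
        = fun ω => (inner ℝ (γ a) (b (V ω) a • (Y ω - P ω)) : ℝ) := by
      funext ω
      rw [real_inner_smul_right, real_inner_comm]
    rw [h1, integral_inner (hIntYP a), hkey a, real_inner_smul_right,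
      real_inner_self_eq_norm_sq]
    ring
  calc (∫ ω, ‖Y ω - P ω‖ ^ 2 ∂μ) - ∫ ω, ‖Y ω - P' ω‖ ^ 2 ∂μ
      = ∫ ω, (‖Y ω - P ω‖ ^ 2 - ‖Y ω - P' ω‖ ^ 2) ∂μ := (integral_sub hInt1 hInt2).symm
    _ = ∫ ω, (2 * ∑ a, b (V ω) a * (inner ℝ (Y ω - P ω) (γ a) : ℝ)
          - ∑ a, b (V ω) a * ‖γ a‖ ^ 2) ∂μ := by
        exact integral_congr_ae (Filter.Eventually.of_forall hpt)
    _ = (∫ ω, 2 * ∑ a, b (V ω) a * (inner ℝ (Y ω - P ω) (γ a) : ℝ) ∂μ)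
          - ∫ ω, ∑ a, b (V ω) a * ‖γ a‖ ^ 2 ∂μ := integral_sub hIntS1 hIntS2
    _ = 2 * (∑ a, ∫ ω, b (V ω) a * (inner ℝ (Y ω - P ω) (γ a) : ℝ) ∂μ)
          - ∑ a, (∫ ω, b (V ω) a ∂μ) * ‖γ a‖ ^ 2 := by
        rw [integral_const_mul, integral_finset_sum _ fun a _ => hIntInner a,
          integral_finset_sum _ fun a _ => (hIntb a).mul_const _]
        simp [integral_mul_const]
    _ = 2 * (∑ a, ‖γ a‖ ^ 2 * ∫ ω, b (V ω) a ∂μ)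
          - ∑ a, ‖γ a‖ ^ 2 * ∫ ω, b (V ω) a ∂μ := by
        rw [Finset.sum_congr rfl fun a _ => hval a]
        congr 1
        exact Finset.sum_congr rfl fun a _ => mul_comm _ _
    _ = ∑ a, ‖γ a‖ ^ 2 * ∫ ω, b (V ω) a ∂μ := by ring
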